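/- Let c : ℝ → ℝ be continuous with inf_{t∈ℝ} c(t) > 0, and let f : ℝ → ℝ be bounded and continuous. If y : ℝ → ℝ is bounded, differentiable, and satisfies y′(t) = −c(t)·y(t) + f(t) for all t ∈ ℝ, then y(t) = ∫_{−∞}^{t} exp(−∫_{s}^{t} c(u) du) · f(s) ds for all t ∈ ℝ. In particular, the equation x′ = −c(t)x + f(t) has exactly one bounded solution on ℝ. -/

import Mathlib

open MeasureTheory

lemma aux_exp_int (δ t : ℝ) (hδ : 0 < δ) :
    IntegrableOn (fun s => Real.exp (δ * s)) (Set.Iic t) := by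
  have m : MeasurableEmbedding fun x : ℝ => -x := (Homeomorph.neg ℝ).measurableEmbedding
  rw [← Measure.map_neg_eq_self (volume : Measure ℝ), m.integrableOn_map_iff]
  simp_rw [Function.comp_def, Set.neg_preimage, Set.neg_Iic, mul_neg, ← neg_mul]
  exact Iff.mpr integrableOn_Ici_iff_integrableOn_Ioi (exp_neg_integrableOn_Ioi (-t) hδ)

/-- Uniqueness of the bounded solution: if `c : ℝ → ℝ` is continuous
with `inf c > 0`, `f` is bounded and continuous, and `y` is a bounded differentiable
function with `y' t = -c t · y t + f t` for all `t`, then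
`y t = ∫_{-∞}^{t} exp(-∫_s^t c) · f s ds`; in particular the equation has exactly one
bounded solution on `ℝ`. -/
theorem stmt11 (c f y : ℝ → ℝ) (hc : Continuous c) (hcinf : 0 < ⨅ t : ℝ, c t)
    (hfc : Continuous f) (hfb : ∃ C : ℝ, ∀ t : ℝ, |f t| ≤ C)
    (hyb : ∃ C : ℝ, ∀ t : ℝ, |y t| ≤ C)
    (hy : ∀ t : ℝ, HasDerivAt y (-(c t) * y t + f t) t) :
    ∀ t : ℝ, y t = ∫ s in Set.Iic t, Real.exp (-∫ u in s..t, c u) * f s := by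
  obtain ⟨Cf, hCf⟩ := hfb
  obtain ⟨Cy, hCy⟩ := hyb
  set δ := ⨅ t : ℝ, c t with hδdef
  have hδ : 0 < δ := hcinf
  have hbdd : BddBelow (Set.range c) := by
    by_contra h
    rw [hδdef, Real.iInf_of_not_bddBelow h] at hδ
    exact lt_irrefl 0 hδ
  have hδc : ∀ t, δ ≤ c t := fun t => ciInf_le hbdd t
  set F : ℝ → ℝ := fun t => ∫ u in (0:ℝ)..t, c u with hFdef
  have hFd : ∀ t : ℝ, HasDerivAt F (c t) t := fun t =>
    intervalIntegral.integral_hasDerivAt_right (hc.intervalIntegrable 0 t)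
      (hc.stronglyMeasurableAtFilter _ _) hc.continuousAt
  have hFc : Continuous F := (Differentiable.continuous fun x => (hFd x).differentiableAt)
  have hint : ∀ s t : ℝ, (∫ u in s..t, c u) = F t - F s := fun s t =>
    (intervalIntegral.integral_interval_sub_left (hc.intervalIntegrable 0 t)
      (hc.intervalIntegrable 0 s)).symm
  have hFlow : ∀ s t : ℝ, s ≤ t → δ * (t - s) ≤ F t - F s := by
    intro s t hst
    rw [← hint]
    calc δ * (t - s) = ∫ _ in s..t, δ := by rw [intervalIntegral.integral_const, smul_eq_mul,
        mul_comm]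
    _ ≤ ∫ u in s..t, c u :=
      intervalIntegral.integral_mono_on hst intervalIntegrable_const
        (hc.intervalIntegrable s t) (fun u _ => hδc u)
  intro t
  -- integrability of the integrand on Iic t
  have hφc : Continuous fun s => Real.exp (-∫ u in s..t, c u) * f s := by
    have : (fun s => Real.exp (-∫ u in s..t, c u)) = fun s => Real.exp (-(F t - F s)) := by
      funext s; rw [hint]
    rw [show (fun s => Real.exp (-∫ u in s..t, c u) * f s)
        = fun s => Real.exp (-(F t - F s)) * f s by funext s; rw [hint]]
    exact (Real.continuous_exp.comp (continuous_const.sub hFc).neg).mul hfc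
  have hCf0 : 0 ≤ Cf := le_trans (abs_nonneg _) (hCf 0)
  have hφint : IntegrableOn (fun s => Real.exp (-∫ u in s..t, c u) * f s) (Set.Iic t) := by
    refine Integrable.mono' (((aux_exp_int δ t hδ).const_mul (Cf * Real.exp (-(δ * t)))))
      (hφc.aestronglyMeasurable.restrict) ?_
    filter_upwards [ae_restrict_mem measurableSet_Iic] with s hs
    have hst : s ≤ t := hs
    have h1 : -∫ u in s..t, c u ≤ δ * s - δ * t := by
      rw [hint]
      have := hFlow s t hst
      nlinarith
    calc ‖Real.exp (-∫ u in s..t, c u) * f s‖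
        = Real.exp (-∫ u in s..t, c u) * |f s| := by
          rw [norm_mul, Real.norm_eq_abs, abs_of_pos (Real.exp_pos _), Real.norm_eq_abs]
      _ ≤ Real.exp (δ * s - δ * t) * Cf := by
          exact mul_le_mul (Real.exp_le_exp.mpr h1) (hCf s) (abs_nonneg _)
            (Real.exp_pos _).le
      _ = Cf * Real.exp (-(δ * t)) * Real.exp (δ * s) := by
          rw [sub_eq_add_neg, Real.exp_add]; ring
  -- the key identity for every r
  have hg : ∀ s : ℝ, HasDerivAt (fun s => Real.exp (F s) * y s) (Real.exp (F s) * f s) s := by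
    intro s
    have h1 : HasDerivAt (fun x => Real.exp (F x)) (Real.exp (F s) * c s) s := (hFd s).exp
    have h2 := h1.mul (hy s)
    exact h2.congr_deriv (by ring)
  have key : ∀ r : ℝ, y t = Real.exp (F r - F t) * y r
      + ∫ s in r..t, Real.exp (-∫ u in s..t, c u) * f s := by
    intro r
    have hii : IntervalIntegrable (fun s => Real.exp (F s) * f s) volume r t :=
      ((Real.continuous_exp.comp hFc).mul hfc).intervalIntegrable r t
    have heq : (∫ s in r..t, Real.exp (F s) * f s)
        = Real.exp (F t) * y t - Real.exp (F r) * y r :=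
      intervalIntegral.integral_eq_sub_of_hasDerivAt (fun s _ => hg s) hii
    have h3 : (∫ s in r..t, Real.exp (-∫ u in s..t, c u) * f s)
        = Real.exp (-F t) * ∫ s in r..t, Real.exp (F s) * f s := by
      rw [← intervalIntegral.integral_const_mul]
      congr 1
      funext s
      rw [hint, show -(F t - F s) = F s + -F t by ring, Real.exp_add]
      ring
    rw [h3, heq]
    have hpos := Real.exp_pos (F t)
    rw [Real.exp_sub, Real.exp_neg]
    field_simp
    ring
  -- limits
  have hlim1 : Filter.Tendsto (fun r => Real.exp (F r - F t) * y r) Filter.atBot (nhds 0) := by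
    refine squeeze_zero_norm' (a := fun r => Cy * Real.exp (δ * (r - t))) ?_ ?_
    · filter_upwards [Filter.eventually_le_atBot t] with r hr
      have h1 : F r - F t ≤ δ * (r - t) := by
        have := hFlow r t hr; nlinarith
      calc ‖Real.exp (F r - F t) * y r‖ = Real.exp (F r - F t) * |y r| := by
            rw [norm_mul, Real.norm_eq_abs, abs_of_pos (Real.exp_pos _), Real.norm_eq_abs]
        _ ≤ Real.exp (δ * (r - t)) * Cy :=
            mul_le_mul (Real.exp_le_exp.mpr h1) (hCy r) (abs_nonneg _) (Real.exp_pos _).le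
        _ = Cy * Real.exp (δ * (r - t)) := mul_comm _ _
    · have h : Filter.Tendsto (fun r : ℝ => δ * (r - t)) Filter.atBot Filter.atBot := by
        have := (Filter.tendsto_atBot_add_const_right Filter.atBot (-t)
          (Filter.tendsto_id (α := ℝ))).const_mul_atBot hδ
        simpa [sub_eq_add_neg] using this
      have h2 := (Real.tendsto_exp_atBot.comp h).const_mul Cy
      simpa using h2
  have hlim2 : Filter.Tendsto (fun r => ∫ s in r..t, Real.exp (-∫ u in s..t, c u) * f s)
      Filter.atBot (nhds (∫ s in Set.Iic t, Real.exp (-∫ u in s..t, c u) * f s)) :=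
    intervalIntegral_tendsto_integral_Iic t hφint Filter.tendsto_id
  have hlim : Filter.Tendsto (fun _ : ℝ => y t) Filter.atBot
      (nhds (0 + ∫ s in Set.Iic t, Real.exp (-∫ u in s..t, c u) * f s)) := by
    have := hlim1.add hlim2
    refine Filter.Tendsto.congr (fun r => (key r).symm) this
  have := tendsto_nhds_unique hlim tendsto_const_nhds
  rw [zero_add] at this
  exact this.symm
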